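/- For any real vector Y = (y₁,…,yₙ) and two weight vectors α, β with positive entries summing to 1, min_k(α_k/β_k) · Var_β(Y) ≤ Var_α(Y) ≤ max_k(α_k/β_k) · Var_β(Y). -/

import Mathlib

private lemma sum_sq_dev {n : ℕ} (w y : Fin n → ℝ) (hw : ∑ i, w i = 1) (c : ℝ) :
    ∑ i, w i * (y i - c)^2
      = (∑ i, w i * y i ^ 2 - (∑ i, w i * y i) ^ 2) + ((∑ i, w i * y i) - c)^2 := by
  have h : ∀ i ∈ Finset.univ, w i * (y i - c)^2
      = w i * y i ^ 2 - 2*c*(w i * y i) + c^2 * w i := fun i _ => by ring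
  rw [Finset.sum_congr rfl h]
  simp only [Finset.sum_add_distrib, Finset.sum_sub_distrib, ← Finset.mul_sum, hw]
  ring

private lemma var_le_sum_sq_dev {n : ℕ} (w y : Fin n → ℝ) (hw : ∑ i, w i = 1) (c : ℝ) :
    ∑ i, w i * y i ^ 2 - (∑ i, w i * y i) ^ 2 ≤ ∑ i, w i * (y i - c)^2 := by
  rw [sum_sq_dev w y hw c]
  nlinarith [sq_nonneg ((∑ i, w i * y i) - c)]

theorem variance_weight_comparison (n : ℕ) (hn : 1 ≤ n)
    (y α β : Fin n → ℝ)
    (hα : ∀ i, 0 < α i) (hαs : ∑ i, α i = 1)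
    (hβ : ∀ i, 0 < β i) (hβs : ∑ i, β i = 1) :
    (⨅ k, α k / β k) * (∑ i, β i * y i ^ 2 - (∑ i, β i * y i) ^ 2) ≤
      ∑ i, α i * y i ^ 2 - (∑ i, α i * y i) ^ 2 ∧
    ∑ i, α i * y i ^ 2 - (∑ i, α i * y i) ^ 2 ≤
      (⨆ k, α k / β k) * (∑ i, β i * y i ^ 2 - (∑ i, β i * y i) ^ 2) := by
  have hne : Nonempty (Fin n) := ⟨⟨0, hn⟩⟩
  set m := ⨅ k, α k / β k with hm
  set M := ⨆ k, α k / β k with hM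
  have hbdd : BddAbove (Set.range fun k => α k / β k) := Set.Finite.bddAbove (Set.finite_range _)
  have hbddb : BddBelow (Set.range fun k => α k / β k) := Set.Finite.bddBelow (Set.finite_range _)
  have hm0 : 0 ≤ m := le_ciInf fun i => le_of_lt (div_pos (hα i) (hβ i))
  have hmle : ∀ i, m * β i ≤ α i := by
    intro i
    have h1 : m ≤ α i / β i := ciInf_le hbddb i
    calc m * β i ≤ (α i / β i) * β i := by
          exact mul_le_mul_of_nonneg_right h1 (hβ i).le
      _ = α i := div_mul_cancel₀ _ (hβ i).ne'
  have hMle : ∀ i, α i ≤ M * β i := by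
    intro i
    have h1 : α i / β i ≤ M := le_ciSup hbdd i
    calc α i = (α i / β i) * β i := (div_mul_cancel₀ _ (hβ i).ne').symm
      _ ≤ M * β i := mul_le_mul_of_nonneg_right h1 (hβ i).le
  set μα := ∑ i, α i * y i with hμα
  set μβ := ∑ i, β i * y i with hμβ
  constructor
  · -- lower bound
    have h1 : ∑ i, β i * y i ^ 2 - μβ ^ 2 ≤ ∑ i, β i * (y i - μα)^2 :=
      var_le_sum_sq_dev β y hβs μα
    have h2 : m * ∑ i, β i * (y i - μα)^2 ≤ ∑ i, α i * (y i - μα)^2 := by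
      rw [Finset.mul_sum]
      apply Finset.sum_le_sum
      intro i _
      rw [← mul_assoc]
      exact mul_le_mul_of_nonneg_right (hmle i) (sq_nonneg _)
    have h3 : ∑ i, α i * (y i - μα)^2 = ∑ i, α i * y i ^ 2 - μα ^ 2 := by
      rw [sum_sq_dev α y hαs μα, ← hμα]; simp
    calc m * (∑ i, β i * y i ^ 2 - μβ ^ 2) ≤ m * ∑ i, β i * (y i - μα)^2 :=
          mul_le_mul_of_nonneg_left h1 hm0
      _ ≤ ∑ i, α i * (y i - μα)^2 := h2
      _ = _ := h3
  · -- upper bound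
    have h1 : ∑ i, α i * y i ^ 2 - μα ^ 2 ≤ ∑ i, α i * (y i - μβ)^2 :=
      var_le_sum_sq_dev α y hαs μβ
    have h2 : ∑ i, α i * (y i - μβ)^2 ≤ M * ∑ i, β i * (y i - μβ)^2 := by
      rw [Finset.mul_sum]
      apply Finset.sum_le_sum
      intro i _
      rw [← mul_assoc]
      exact mul_le_mul_of_nonneg_right (hMle i) (sq_nonneg _)
    have h3 : ∑ i, β i * (y i - μβ)^2 = ∑ i, β i * y i ^ 2 - μβ ^ 2 := by
      rw [sum_sq_dev β y hβs μβ, ← hμβ]; simp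
    calc ∑ i, α i * y i ^ 2 - μα ^ 2 ≤ ∑ i, α i * (y i - μβ)^2 := h1
      _ ≤ M * ∑ i, β i * (y i - μβ)^2 := h2
      _ = M * (∑ i, β i * y i ^ 2 - μβ ^ 2) := by rw [h3]
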